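/- Let G be a cubic graph and let P* be a valid factor of G with the minimum number of connected components. Then no edge of G joins two external vertices lying in two distinct components of P*. -/

import Mathlib

open SimpleGraph

/-- A cubic graph: every vertex has degree 3. -/
def IsCubic {V : Type*} [Fintype V] (G : SimpleGraph V) : Prop :=
  ∀ v : V, Nat.card (G.neighborSet v) = 3

/-- A circular nowhere-zero `r`-flow: an orientation `dir` of `G` together with
a flow value `f` on each directed edge, with values in `[1, r-1]` and flow
conservation at every vertex. -/
structure CNZF {V : Type*} [Fintype V] (G : SimpleGraph V) (r : ℝ) where
  dir : V → V → Bool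
  f : V → V → ℝ
  orients : ∀ u v, G.Adj u v ↔ (dir u v = true ∨ dir v u = true)
  asymm : ∀ u v, dir u v = true → dir v u = false
  lb : ∀ u v, dir u v = true → 1 ≤ f u v
  ub : ∀ u v, dir u v = true → f u v ≤ r - 1
  conserv : ∀ v : V, (∑ u : V, if dir v u = true then f v u else 0)
      = ∑ u : V, if dir u v = true then f u v else 0

/-- Out-degree of a vertex in an orientation. -/
noncomputable def outDeg {V : Type*} (dir : V → V → Bool) (v : V) : ℕ :=
  Nat.card {u | dir v u = true}

/-- Every connected component of the subgraph induced by `S` is a tree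
on at most `m` vertices. -/
def MonoOK {V : Type*} (G : SimpleGraph V) (m : ℕ) (S : Set V) : Prop :=
  (G.induce S).IsAcyclic ∧
    ∀ c : (G.induce S).ConnectedComponent, Nat.card c.supp ≤ m

/-- A `k`-weak bisection, given by its first part `S`. -/
def IsWeakBisection {V : Type*} [Fintype V] (G : SimpleGraph V) (k : ℕ) (S : Set V) : Prop :=
  Nat.card S = Nat.card (Sᶜ : Set V) ∧ MonoOK G (k-2) S ∧ MonoOK G (k-2) (Sᶜ : Set V)

/-- Every monochromatic component of the 2-coloring `c` has at most `m` vertices. -/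
def MonoAtMost {V : Type*} (G : SimpleGraph V) (c : V → Bool) (m : ℕ) : Prop :=
  ∀ b : Bool, ∀ comp : (G.induce {v | c v = b}).ConnectedComponent,
    Nat.card comp.supp ≤ m

/-- Edges of `L_k` (on vertex labels `0, …, 5+2k`): `L_0` is `K_{3,3}` minus an
edge (parts `{0,1,4}` and `{2,3,5}`, edge `45` removed, degree-2 vertices `4,5`);
at step `j` the two new adjacent vertices `4+2j, 5+2j` are attached to the
previous degree-2 vertices `2+2j, 3+2j`. The degree-2 vertices of `L_k` are
`4+2k` and `5+2k`. -/
def LEdge (k : ℕ) (a b : ℕ) : Prop :=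
  (a, b) ∈ ({(0,2),(0,3),(0,5),(1,2),(1,3),(1,5),(4,2),(4,3)} : Set (ℕ × ℕ)) ∨
  ∃ j, 1 ≤ j ∧ j ≤ k ∧
    ((a, b) = (4+2*j, 5+2*j) ∨ (a, b) = (2+2*j, 4+2*j) ∨ (a, b) = (3+2*j, 5+2*j))

/-- The graph `L_k`. -/
def Lgraph (k : ℕ) : SimpleGraph (Fin (6+2*k)) :=
  SimpleGraph.fromRel (fun a b => LEdge k a.val b.val)

/-- Edges of `T_k`: one copy of `L'_k` (the copy of `L_k` on `0..5+2k` with apex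
`6+2k`), two copies of `L'_0` (on `7+2k..12+2k` with apex `13+2k`, and on
`14+2k..19+2k` with apex `20+2k`), and a central vertex `21+2k` adjacent to the
three apexes. -/
def TEdge (k : ℕ) (a b : ℕ) : Prop :=
  LEdge k a b
  ∨ (a = 6+2*k ∧ (b = 4+2*k ∨ b = 5+2*k))
  ∨ (∃ a' b', LEdge 0 a' b' ∧ a = 7+2*k+a' ∧ b = 7+2*k+b')
  ∨ (a = 13+2*k ∧ (b = 11+2*k ∨ b = 12+2*k))
  ∨ (∃ a' b', LEdge 0 a' b' ∧ a = 14+2*k+a' ∧ b = 14+2*k+b')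
  ∨ (a = 20+2*k ∧ (b = 18+2*k ∨ b = 19+2*k))
  ∨ (a = 21+2*k ∧ (b = 6+2*k ∨ b = 13+2*k ∨ b = 20+2*k))

/-- The cubic graph `T_k`. -/
def Tgraph (k : ℕ) : SimpleGraph (Fin (22+2*k)) :=
  SimpleGraph.fromRel (fun a b => TEdge k a.val b.val)

/-- A valid factor of `G`: a spanning subgraph all of whose components are paths
or cycles (equivalently, all degrees are 1 or 2), such that the two endpoints
(degree-1 vertices) of every odd component are non-adjacent in `G`; in particular
no component is an isolated vertex. -/
def IsValidFactor {V : Type*} (G H : SimpleGraph V) : Prop :=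
  H ≤ G ∧
  (∀ v : V, 1 ≤ Nat.card (H.neighborSet v) ∧ Nat.card (H.neighborSet v) ≤ 2) ∧
  ∀ c : H.ConnectedComponent, Odd (Nat.card c.supp) →
    ∀ u v : V, u ∈ c.supp → v ∈ c.supp → u ≠ v →
      Nat.card (H.neighborSet u) = 1 → Nat.card (H.neighborSet v) = 1 → ¬ G.Adj u v

/-- A component of `H` is a cycle iff all its vertices have degree 2 in `H`. -/
def IsCycleComp {V : Type*} (H : SimpleGraph V) (c : H.ConnectedComponent) : Prop :=
  ∀ v ∈ c.supp, Nat.card (H.neighborSet v) = 2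

/-- An odd cycle component. -/
def OddCycleComp {V : Type*} (H : SimpleGraph V) (c : H.ConnectedComponent) : Prop :=
  Odd (Nat.card c.supp) ∧ IsCycleComp H c

/-- An odd path component (a component with an odd number of vertices containing
a degree-1 vertex). -/
def OddPathComp {V : Type*} (H : SimpleGraph V) (c : H.ConnectedComponent) : Prop :=
  Odd (Nat.card c.supp) ∧ ∃ v ∈ c.supp, Nat.card (H.neighborSet v) = 1

noncomputable def numComponents {V : Type*} (H : SimpleGraph V) : ℕ := Nat.card H.ConnectedComponent

noncomputable def numOddCycles {V : Type*} (H : SimpleGraph V) : ℕ :=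
  Nat.card {c : H.ConnectedComponent // OddCycleComp H c}

/-- `H` is a valid factor of `G` with the minimum number of components. -/
def MinimizesComponents {V : Type*} (G H : SimpleGraph V) : Prop :=
  IsValidFactor G H ∧ ∀ H' : SimpleGraph V, IsValidFactor G H' →
    numComponents H ≤ numComponents H'

/-- `H` is a valid factor of `G` minimizing the number of components and,
subject to that, the number of odd cycles. -/
def IsMinValidFactor {V : Type*} (G H : SimpleGraph V) : Prop :=
  MinimizesComponents G H ∧
  ∀ H' : SimpleGraph V, IsValidFactor G H' →
    numComponents H' = numComponents H → numOddCycles H ≤ numOddCycles H'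

/-- An external vertex of a factor: an endpoint of a path component, or a vertex
of an odd cycle component. -/
def ExternalVtx {V : Type*} (H : SimpleGraph V) (v : V) : Prop :=
  Nat.card (H.neighborSet v) = 1 ∨ OddCycleComp H (H.connectedComponentMk v)

open SimpleGraph

section Helpers

variable {V : Type*} [Fintype V]

open Classical in
lemma cycle_delete_reachable (H : SimpleGraph V) (u u' : V) (hadj : H.Adj u u')
    (hcyc : ∀ w, H.Reachable u w → Nat.card (H.neighborSet w) = 2) :
    (H.deleteEdges {s(u,u')}).Reachable u u' := by
  by_contra hreach
  set K := H.deleteEdges {s(u,u')} with hK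
  set S : Set V := {w | K.Reachable u w} with hS
  have hKH : K ≤ H := deleteEdges_le _
  have hne : u ≠ u' := hadj.ne
  let K' : SimpleGraph V :=
    { Adj := fun a b => K.Adj a b ∧ a ∈ S ∧ b ∈ S
      symm := ⟨fun a b ⟨h1, h2, h3⟩ => ⟨h1.symm, h3, h2⟩⟩
      loopless := ⟨fun a ⟨h1, _⟩ => K.irrefl h1⟩ }
  have hclosed : ∀ a b, a ∈ S → K.Adj a b → b ∈ S := fun a b ha hab =>
    ha.trans hab.reachable
  have huS : u ∈ S := Reachable.refl u
  have hu'S : u' ∉ S := hreach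
  have hnb : ∀ w ∈ S, K'.neighborSet w = K.neighborSet w := by
    intro w hw
    ext z
    exact ⟨fun h => h.1, fun h => ⟨h, hw, hclosed w z hw h⟩⟩
  have hdegnc : ∀ v, K'.degree v = Nat.card (K'.neighborSet v) := fun v => by
    rw [← card_neighborSet_eq_degree, Nat.card_eq_fintype_card]
  have hKu : K.neighborSet u = H.neighborSet u \ {u'} := by
    ext z
    simp only [hK, mem_neighborSet, deleteEdges_adj, Set.mem_singleton_iff,
      Set.mem_diff, Sym2.eq_iff]
    constructor
    · rintro ⟨h1, h2⟩
      exact ⟨h1, fun hz => h2 (by subst hz; tauto)⟩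
    · rintro ⟨h1, h2⟩
      refine ⟨h1, fun hz => ?_⟩
      rcases hz with ⟨-, rfl⟩ | ⟨h3, -⟩
      · exact h2 rfl
      · exact hne h3
  have hKw : ∀ w, w ≠ u → w ≠ u' → K.neighborSet w = H.neighborSet w := by
    intro w hwu hwu'
    ext z
    simp only [hK, mem_neighborSet, deleteEdges_adj, Set.mem_singleton_iff, Sym2.eq_iff]
    constructor
    · exact fun h => h.1
    · intro h
      refine ⟨h, fun hz => ?_⟩
      rcases hz with ⟨h1, -⟩ | ⟨h1, -⟩
      · exact hwu h1
      · exact hwu' h1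
  have hdegu : K'.degree u = 1 := by
    rw [hdegnc, hnb u huS, hKu, Nat.card_coe_set_eq,
      Set.ncard_diff_singleton_of_mem (show u' ∈ H.neighborSet u from hadj),
      ← Nat.card_coe_set_eq, hcyc u (Reachable.refl u)]
  have hdegS : ∀ w ∈ S, w ≠ u → K'.degree w = 2 := by
    intro w hw hwu
    have hwu' : w ≠ u' := fun h => hu'S (h ▸ hw)
    rw [hdegnc, hnb w hw, hKw w hwu hwu']
    exact hcyc w (Reachable.mono hKH hw)
  have hdegO : ∀ w, w ∉ S → K'.degree w = 0 := by
    intro w hw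
    rw [hdegnc]
    have h0 : K'.neighborSet w = ∅ := by
      ext z; exact ⟨fun h => hw h.2.1, fun h => absurd h (Set.notMem_empty z)⟩
    rw [h0]; simp
  have hfilter : Finset.filter (fun v => Odd (K'.degree v)) Finset.univ = {u} := by
    ext v
    simp only [Finset.mem_filter, Finset.mem_univ, true_and, Finset.mem_singleton]
    constructor
    · intro hodd
      by_contra hvu
      by_cases hv : v ∈ S
      · rw [hdegS v hv hvu] at hodd; exact Nat.not_odd_iff_even.mpr (by norm_num) hodd
      · rw [hdegO v hv] at hodd; exact Nat.not_odd_iff_even.mpr (by norm_num) hodd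
    · rintro rfl; rw [hdegu]; exact odd_one
  have heven : Even (Finset.filter (fun v => Odd (K'.degree v)) Finset.univ).card := by
    convert K'.even_card_odd_degree_vertices
  rw [hfilter] at heven
  simp at heven

omit [Fintype V] in
lemma reach_of_delete (H : SimpleGraph V) (u u' : V)
    (h : (H.deleteEdges {s(u,u')}).Reachable u u') :
    ∀ a b : V, H.Reachable a b → (H.deleteEdges {s(u,u')}).Reachable a b := by
  intro a b hab
  obtain ⟨w⟩ := hab
  induction w with
  | nil => exact Reachable.refl _
  | cons hadj p ih =>
    rename_i x y z
    refine Reachable.trans ?_ ih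
    by_cases he : s(x, y) = s(u, u')
    · rw [Sym2.eq_iff] at he
      rcases he with ⟨rfl, rfl⟩ | ⟨rfl, rfl⟩
      · exact h
      · exact h.symm
    · exact Adj.reachable (by rw [deleteEdges_adj]; exact ⟨hadj, he⟩)

lemma comp_card_le (H K : SimpleGraph V)
    (hreach : ∀ a b : V, H.Reachable a b → K.Reachable a b) :
    Nat.card K.ConnectedComponent ≤ Nat.card H.ConnectedComponent := by
  have hsurj : Function.Surjective
      (ConnectedComponent.lift (fun v => K.connectedComponentMk v)
        (fun v w p _ => ConnectedComponent.sound (hreach v w ⟨p⟩)) :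
        H.ConnectedComponent → K.ConnectedComponent) := by
    intro c
    obtain ⟨v, rfl⟩ := c.exists_rep
    exact ⟨H.connectedComponentMk v, rfl⟩
  exact Nat.card_le_card_of_surjective _ hsurj

lemma comp_card_lt (H K : SimpleGraph V)
    (hreach : ∀ a b : V, H.Reachable a b → K.Reachable a b) (u v : V)
    (h1 : ¬ H.Reachable u v) (h2 : K.Reachable u v) :
    Nat.card K.ConnectedComponent < Nat.card H.ConnectedComponent := by
  classical
  let f : H.ConnectedComponent → K.ConnectedComponent :=
    ConnectedComponent.lift (fun v => K.connectedComponentMk v)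
      (fun v w p _ => ConnectedComponent.sound (hreach v w ⟨p⟩))
  have hsurj : Function.Surjective f := by
    intro c
    obtain ⟨v, rfl⟩ := c.exists_rep
    exact ⟨H.connectedComponentMk v, rfl⟩
  have hninj : ¬ Function.Injective f := by
    intro hinj
    exact h1 ((ConnectedComponent.eq).mp
      (hinj (show f (H.connectedComponentMk u) = f (H.connectedComponentMk v) from
        ConnectedComponent.sound h2)))
  have key : ∀ (α β : Type _) [Finite α] (g : α → β), Function.Surjective g →
      ¬ Function.Injective g → Nat.card β < Nat.card α := by
    intro α β _ g hs hi
    have : Finite β := Finite.of_surjective g hs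
    have := Fintype.ofFinite α
    have := Fintype.ofFinite β
    rw [Nat.card_eq_fintype_card, Nat.card_eq_fintype_card]
    exact Fintype.card_lt_of_surjective_not_injective g hs hi
  exact key _ _ f hsurj hninj

omit [Fintype V] in
lemma delete_nbh_end (H : SimpleGraph V) (u u' : V) (hne : u ≠ u') :
    (H.deleteEdges {s(u,u')}).neighborSet u = H.neighborSet u \ {u'} := by
  ext z
  simp only [mem_neighborSet, deleteEdges_adj, Set.mem_singleton_iff,
    Set.mem_diff, Sym2.eq_iff]
  constructor
  · rintro ⟨h1, h2⟩
    exact ⟨h1, fun hz => h2 (by subst hz; tauto)⟩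
  · rintro ⟨h1, h2⟩
    refine ⟨h1, fun hz => ?_⟩
    rcases hz with ⟨-, rfl⟩ | ⟨h3, -⟩
    · exact h2 rfl
    · exact hne h3

omit [Fintype V] in
lemma delete_nbh_other (H : SimpleGraph V) (u u' w : V) (hwu : w ≠ u) (hwu' : w ≠ u') :
    (H.deleteEdges {s(u,u')}).neighborSet w = H.neighborSet w := by
  ext z
  simp only [mem_neighborSet, deleteEdges_adj, Set.mem_singleton_iff, Sym2.eq_iff]
  constructor
  · exact fun h => h.1
  · intro h
    refine ⟨h, fun hz => ?_⟩
    rcases hz with ⟨h1, -⟩ | ⟨h1, -⟩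
    · exact hwu h1
    · exact hwu' h1

lemma nbh_card_delete (H : SimpleGraph V) (u u' : V) (hadj : H.Adj u u')
    (h2 : Nat.card (H.neighborSet u) = 2) :
    Nat.card ((H.deleteEdges {s(u,u')}).neighborSet u) = 1 := by
  rw [delete_nbh_end H u u' hadj.ne, Nat.card_coe_set_eq,
    Set.ncard_diff_singleton_of_mem (show u' ∈ H.neighborSet u from hadj),
    ← Nat.card_coe_set_eq, h2]

/-- One-sided surgery at an external vertex. -/
lemma surgery (H : SimpleGraph V)
    (hdeg : ∀ w, 1 ≤ Nat.card (H.neighborSet w) ∧ Nat.card (H.neighborSet w) ≤ 2)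
    (u : V)
    (hu : Nat.card (H.neighborSet u) = 1 ∨
      ∀ w, H.Reachable u w → Nat.card (H.neighborSet w) = 2) :
    ∃ H1 : SimpleGraph V, H1 ≤ H ∧ Nat.card (H1.neighborSet u) = 1 ∧
      (∀ w, 1 ≤ Nat.card (H1.neighborSet w) ∧ Nat.card (H1.neighborSet w) ≤ 2) ∧
      (∀ a b : V, H.Reachable a b → H1.Reachable a b) ∧
      (∀ w, ¬ H.Reachable u w → H1.neighborSet w = H.neighborSet w) := by
  rcases hu with hu | hcyc
  · exact ⟨H, le_refl _, hu, hdeg, fun a b h => h, fun w _ => rfl⟩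
  · have hcard : Nat.card (H.neighborSet u) = 2 := hcyc u (Reachable.refl u)
    have hne : (H.neighborSet u).Nonempty := by
      rw [Set.nonempty_iff_ne_empty]
      intro h
      rw [Nat.card_coe_set_eq, h, Set.ncard_empty] at hcard
      norm_num at hcard
    obtain ⟨u', hu'⟩ := hne
    have hadj : H.Adj u u' := hu'
    have hneq : u ≠ u' := hadj.ne
    have hswap : s(u, u') = s(u', u) := Sym2.eq_swap
    refine ⟨H.deleteEdges {s(u,u')}, deleteEdges_le _, nbh_card_delete H u u' hadj hcard,
      ?_, reach_of_delete H u u' (cycle_delete_reachable H u u' hadj hcyc), ?_⟩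
    · intro w
      by_cases hwu : w = u
      · rw [hwu, nbh_card_delete H u u' hadj hcard]
        norm_num
      · by_cases hwu' : w = u'
        · rw [hwu', hswap, nbh_card_delete H u' u hadj.symm (hcyc u' hadj.reachable)]
          norm_num
        · rw [delete_nbh_other H u u' w hwu hwu']
          exact hdeg w
    · intro w hw
      have hwu : w ≠ u := by intro h; subst h; exact hw (Reachable.refl _)
      have hwu' : w ≠ u' := by intro h; subst h; exact hw hadj.reachable
      exact delete_nbh_other H u u' w hwu hwu'

omit [Fintype V] in
lemma sup_edge_nbh_end (K : SimpleGraph V) (x y : V) (hxy : x ≠ y) :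
    (K ⊔ fromEdgeSet {s(x,y)}).neighborSet x = insert y (K.neighborSet x) := by
  ext z
  simp only [mem_neighborSet, sup_adj, fromEdgeSet_adj, Set.mem_singleton_iff,
    Set.mem_insert_iff, Sym2.eq_iff]
  aesop

omit [Fintype V] in
lemma sup_edge_nbh_other (K : SimpleGraph V) (x y w : V) (hwx : w ≠ x) (hwy : w ≠ y) :
    (K ⊔ fromEdgeSet {s(x,y)}).neighborSet w = K.neighborSet w := by
  ext z
  simp only [mem_neighborSet, sup_adj, fromEdgeSet_adj, Set.mem_singleton_iff, Sym2.eq_iff]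
  aesop

lemma sup_edge_card_end (K : SimpleGraph V) (x y : V) (hxy : x ≠ y)
    (hy : ¬ K.Adj x y) :
    Nat.card ((K ⊔ fromEdgeSet {s(x,y)}).neighborSet x)
      = Nat.card (K.neighborSet x) + 1 := by
  rw [sup_edge_nbh_end K x y hxy, Nat.card_coe_set_eq, Nat.card_coe_set_eq,
    Set.ncard_insert_of_notMem (show y ∉ K.neighborSet x from hy) (Set.toFinite _)]

omit [Fintype V] in
lemma two_leaf_comp (K : SimpleGraph V) (x y : V) (hadj : K.Adj x y)
    (hdx : Nat.card (K.neighborSet x) = 1) (hdy : Nat.card (K.neighborSet y) = 1) :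
    ∀ z, K.Reachable x z → z = x ∨ z = y := by
  have hnx : K.neighborSet x = {y} := by
    rw [Nat.card_coe_set_eq, Set.ncard_eq_one] at hdx
    obtain ⟨a, ha⟩ := hdx
    have h2 : y ∈ K.neighborSet x := hadj
    rw [ha] at h2 ⊢
    rw [Set.mem_singleton_iff] at h2
    rw [h2]
  have hny : K.neighborSet y = {x} := by
    rw [Nat.card_coe_set_eq, Set.ncard_eq_one] at hdy
    obtain ⟨a, ha⟩ := hdy
    have h2 : x ∈ K.neighborSet y := hadj.symm
    rw [ha] at h2 ⊢
    rw [Set.mem_singleton_iff] at h2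
    rw [h2]
  have key : ∀ a b : V, K.Walk a b → (a = x ∨ a = y) → (b = x ∨ b = y) := by
    intro a b w
    induction w with
    | nil => exact id
    | @cons s t r hst p ih =>
      intro hs
      apply ih
      rcases hs with rfl | rfl
      · have h2 : t ∈ K.neighborSet s := hst
        rw [hnx] at h2
        exact Or.inr h2
      · have h2 : t ∈ K.neighborSet s := hst
        rw [hny] at h2
        exact Or.inl h2
  intro z hz
  obtain ⟨w⟩ := hz
  exact key x z w (Or.inl rfl)

end Helpers

/-- In a valid factor with the minimum number of components, no edge of G joins
two external vertices lying in distinct components. -/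
theorem stmt9 {V : Type*} [Fintype V] (G H : SimpleGraph V) (hG : IsCubic G)
    (hmin : MinimizesComponents G H) (u v : V)
    (hu : ExternalVtx H u) (hv : ExternalVtx H v)
    (hcomp : H.connectedComponentMk u ≠ H.connectedComponentMk v) :
    ¬ G.Adj u v := by
  intro hadj
  obtain ⟨⟨hHG, hdeg, _hval⟩, hminM⟩ := hmin
  have hne : u ≠ v := hadj.ne
  have hreachuv : ¬ H.Reachable u v := fun h => hcomp (ConnectedComponent.sound h)
  have extconv : ∀ w : V, ExternalVtx H w →
      Nat.card (H.neighborSet w) = 1 ∨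
        ∀ z, H.Reachable w z → Nat.card (H.neighborSet z) = 2 := by
    intro w hw
    rcases hw with h | ⟨-, h⟩
    · exact Or.inl h
    · right; intro z hz
      exact h z (ConnectedComponent.mem_supp_iff _ _ |>.mpr
        (ConnectedComponent.sound hz.symm))
  obtain ⟨H1, hH1le, hdegu1, hdeg1, hreach1, hun1⟩ := surgery H hdeg u (extconv u hu)
  have hv1 : Nat.card (H1.neighborSet v) = 1 ∨
      ∀ z, H1.Reachable v z → Nat.card (H1.neighborSet z) = 2 := by
    rcases extconv v hv with h | h
    · left; rw [hun1 v hreachuv]; exact h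
    · right; intro z hz
      have hz' : H.Reachable v z := Reachable.mono hH1le hz
      have hnz : ¬ H.Reachable u z := fun hx => hreachuv (hx.trans hz'.symm)
      rw [hun1 z hnz]
      exact h z hz'
  obtain ⟨H2', hH2le, hdegv2, hdeg2, hreach2, hun2⟩ := surgery H1 hdeg1 v hv1
  have hu2 : Nat.card (H2'.neighborSet u) = 1 := by
    have hvu : ¬ H1.Reachable v u := fun h => hreachuv ((Reachable.mono hH1le h).symm)
    rw [hun2 u hvu]; exact hdegu1
  have hH2'H : H2' ≤ H := hH2le.trans hH1le
  have hadjH2' : ¬ H2'.Adj u v := fun h => hreachuv (Reachable.mono hH2'H h.reachable)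
  set H2 : SimpleGraph V := H2' ⊔ fromEdgeSet {s(u,v)} with hH2def
  have hH2G : H2 ≤ G := by
    refine sup_le (hH2'H.trans hHG) ?_
    intro a b hab
    rw [fromEdgeSet_adj, Set.mem_singleton_iff, Sym2.eq_iff] at hab
    rcases hab.1 with ⟨rfl, rfl⟩ | ⟨rfl, rfl⟩
    · exact hadj
    · exact hadj.symm
  have hdegH2 : ∀ w, 1 ≤ Nat.card (H2.neighborSet w) ∧ Nat.card (H2.neighborSet w) ≤ 2 := by
    intro w
    by_cases hwu : w = u
    · rw [hwu, hH2def, sup_edge_card_end H2' u v hne hadjH2', hu2]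
      norm_num
    · by_cases hwv : w = v
      · have hswap : s(u, v) = s(v, u) := Sym2.eq_swap
        rw [hwv, hH2def, hswap,
          sup_edge_card_end H2' v u hne.symm (fun h => hadjH2' h.symm), hdegv2]
        norm_num
      · rw [hH2def, sup_edge_nbh_other H2' u v w hwu hwv]
        exact hdeg2 w
  have hH2uv : H2.Reachable u v :=
    Adj.reachable (by
      rw [hH2def, sup_adj, fromEdgeSet_adj]
      exact Or.inr ⟨Set.mem_singleton _, hne⟩)
  have hcomplt : Nat.card H2.ConnectedComponent < Nat.card H.ConnectedComponent :=
    comp_card_lt H H2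
      (fun a b h => Reachable.mono le_sup_left (hreach2 a b (hreach1 a b h)))
      u v hreachuv hH2uv
  classical
  set S : Set (SimpleGraph V) := {K | K ≤ G ∧
      (∀ w, 1 ≤ Nat.card (K.neighborSet w) ∧ Nat.card (K.neighborSet w) ≤ 2) ∧
      Nat.card K.ConnectedComponent < Nat.card H.ConnectedComponent} with hSdef
  have hH2S : H2 ∈ S := ⟨hH2G, hdegH2, hcomplt⟩
  obtain ⟨K, hKS, hKmax⟩ := Set.Finite.exists_maximalFor
    (fun K : SimpleGraph V => K.edgeSet.ncard) S (Set.toFinite S) ⟨H2, hH2S⟩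
  obtain ⟨hKG, hKdeg, hKlt⟩ := hKS
  have hKvalid : IsValidFactor G K := by
    refine ⟨hKG, hKdeg, ?_⟩
    intro c hodd x y hx hy hxy hdx hdy hGxy
    have hKxy : ¬ K.Adj x y := by
      intro hxyK
      have hsupp : c.supp = {x, y} := by
        ext z
        rw [ConnectedComponent.mem_supp_iff]
        constructor
        · intro hzc
          have hr : K.Reachable x z := (ConnectedComponent.eq).mp (hx.trans hzc.symm)
          rcases two_leaf_comp K x y hxyK hdx hdy z hr with rfl | rfl
          · exact Set.mem_insert _ _
          · exact Set.mem_insert_of_mem _ rfl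
        · intro hz
          rcases hz with rfl | hz
          · exact hx
          · rw [Set.mem_singleton_iff] at hz; subst hz; exact hy
      have hc2 : Nat.card c.supp = 2 := by
        rw [hsupp, Nat.card_coe_set_eq, Set.ncard_pair hxy]
      rw [hc2] at hodd
      exact Nat.not_odd_iff_even.mpr (by norm_num) hodd
    set K' : SimpleGraph V := K ⊔ fromEdgeSet {s(x,y)} with hK'def
    have hK'S : K' ∈ S := by
      refine ⟨?_, ?_, lt_of_le_of_lt
        (comp_card_le K K' (fun a b h => Reachable.mono le_sup_left h)) hKlt⟩
      · refine sup_le hKG ?_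
        intro a b hab
        rw [fromEdgeSet_adj, Set.mem_singleton_iff, Sym2.eq_iff] at hab
        rcases hab.1 with ⟨rfl, rfl⟩ | ⟨rfl, rfl⟩
        · exact hGxy
        · exact hGxy.symm
      · intro w
        by_cases hwx : w = x
        · rw [hwx, hK'def, sup_edge_card_end K x y hxy hKxy, hdx]
          norm_num
        · by_cases hwy : w = y
          · have hswap : s(x, y) = s(y, x) := Sym2.eq_swap
            rw [hwy, hK'def, hswap,
              sup_edge_card_end K y x hxy.symm (fun h => hKxy h.symm), hdy]
            norm_num
          · rw [hK'def, sup_edge_nbh_other K x y w hwx hwy]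
            exact hKdeg w
    have hmore : K.edgeSet.ncard < K'.edgeSet.ncard := by
      have hss : K.edgeSet ⊂ K'.edgeSet := by
        constructor
        · rw [hK'def, edgeSet_sup]
          exact Set.subset_union_left
        · intro hsub
          have hmem : s(x, y) ∈ K'.edgeSet := by
            rw [mem_edgeSet, hK'def, sup_adj, fromEdgeSet_adj]
            exact Or.inr ⟨Set.mem_singleton _, hxy⟩
          exact hKxy (mem_edgeSet _ |>.mp (hsub hmem))
      exact Set.ncard_lt_ncard hss (Set.toFinite _)
    exact absurd (hKmax hK'S (le_of_lt hmore)) (not_le.mpr hmore)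
  have hle := hminM K hKvalid
  simp only [numComponents] at hle
  omega
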